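/- For all integers d1, d2 with 2 < d1 < d2, in the game i-MARK({1},{d1,d2}), convergence occurs in at most d1²·d2² + d2 + 1 steps at every starting position n ∈ ℕ. -/
import Mathlib


/-- The minimum excludant of a set of naturals. -/
noncomputable def mex (T : Set ℕ) : ℕ := sInf {k : ℕ | k ∉ T}

/-- The set of followers of position `n` in the game i-MARK(S,D):
`n - s` for `s ∈ S` with `0 < s ≤ n`, and `n / d` for `d ∈ D` with `2 ≤ d`, `0 < n`, `d ∣ n`. -/
def followers (S D : Finset ℕ) (n : ℕ) : Finset ℕ :=
  ((S.filter fun s => 0 < s ∧ s ≤ n).image fun s => n - s) ∪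
  ((D.filter fun d => 2 ≤ d ∧ 0 < n ∧ d ∣ n).image fun d => n / d)

theorem followers_lt {S D : Finset ℕ} {n m : ℕ} (h : m ∈ followers S D n) : m < n := by
  simp only [followers, Finset.mem_union, Finset.mem_image, Finset.mem_filter] at h
  rcases h with ⟨s, ⟨-, hs, hsn⟩, rfl⟩ | ⟨d, ⟨-, hd, hn, -⟩, rfl⟩
  · omega
  · exact Nat.div_lt_self hn (by omega)

/-- The Sprague–Grundy function of i-MARK(S,D). -/
noncomputable def grundy (S D : Finset ℕ) : ℕ → ℕ
  | n => mex ↑((followers S D n).attach.image fun m => grundy S D m.1)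
decreasing_by exact followers_lt m.2

/-- The number of followers of position `n` in i-MARK(S,D) (for positive `S` and `D` with
elements `≥ 2`): `φ(0) = 0` and `φ(n) = #{s ∈ S : s ≤ n} + #{d ∈ D : d ∣ n}` for `n > 0`. -/
def numFollowers (S D : Finset ℕ) (n : ℕ) : ℕ :=
  if n = 0 then 0 else (S.filter fun s => s ≤ n).card + (D.filter fun d => d ∣ n).card

/-- `σ : ℕ → ℕ` is a guess seed for starting position `n` in i-MARK(S,D) if
`σ i ≤ φ(i)` for all `n ≤ i < n + max S` (values of `σ` outside this window are irrelevant). -/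
def IsGuessSeed (S D : Finset ℕ) (n : ℕ) (σ : ℕ → ℕ) : Prop :=
  ∀ i, n ≤ i → i < n + S.sup id → σ i ≤ numFollowers S D i

/-- The guess sequence generated by seed `σ` from starting position `n`: it equals `σ` on
`[n, n + max S)`, and from `n + max S` on it is computed by the mex rule, using guessed values
for subtraction followers and true Grundy values for division followers. -/
noncomputable def guessSeq (S D : Finset ℕ) (n : ℕ) (σ : ℕ → ℕ) : ℕ → ℕ
  | m =>
    if m < n + S.sup id then σ m
    else
      mex ((↑((S.filter fun t => 0 < t ∧ t ≤ m).attach.image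
              fun t => guessSeq S D n σ (m - t.1)) : Set ℕ) ∪
        {g | ∃ d ∈ D, 2 ≤ d ∧ 0 < m ∧ d ∣ m ∧ g = grundy S D (m / d)})
decreasing_by
  have ht := t.2
  simp only [Finset.mem_filter] at ht
  omega

/-- Convergence occurs in `c` steps at starting position `n`: any two guess sequences from `n`
agree on all positions `m` with `n + c ≤ m < n + c + max S`. -/
def ConvergesIn (S D : Finset ℕ) (n c : ℕ) : Prop :=
  ∀ σ σ' : ℕ → ℕ, IsGuessSeed S D n σ → IsGuessSeed S D n σ' →
    ∀ m, n + c ≤ m → m < n + c + S.sup id → guessSeq S D n σ m = guessSeq S D n σ' m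

def dvals (d₁ d₂ m : ℕ) : Set ℕ :=
  {g | ∃ d ∈ ({d₁, d₂} : Finset ℕ), 2 ≤ d ∧ 0 < m ∧ d ∣ m ∧ g = grundy {1} {d₁, d₂} (m / d)}

lemma guessSeq_ge {d₁ d₂ n m : ℕ} (σ : ℕ → ℕ) (hm : n + 1 ≤ m) :
    guessSeq {1} {d₁, d₂} n σ m =
      mex ({guessSeq {1} {d₁, d₂} n σ (m - 1)} ∪ dvals d₁ d₂ m) := by
  rw [guessSeq]
  rw [if_neg (by simp; omega)]
  congr 1
  congr 1
  ext x
  simp only [Finset.coe_image, Set.mem_image, Finset.mem_coe, Finset.mem_attach,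
    Set.mem_singleton_iff, true_and, Subtype.exists]
  constructor
  · rintro ⟨t, ht, rfl⟩
    simp only [Finset.mem_filter, Finset.mem_singleton] at ht
    rw [ht.1]
  · rintro rfl
    refine ⟨1, ?_, rfl⟩
    simp only [Finset.mem_filter, Finset.mem_singleton]
    exact ⟨trivial, by omega⟩

lemma grundy_zero (d₁ d₂ : ℕ) : grundy {1} {d₁, d₂} 0 = 0 := by
  rw [grundy]
  apply Nat.sInf_eq_zero.mpr (Or.inl ?_)
  simp [followers]

lemma grundy_succ {d₁ d₂ m : ℕ} (hm : 1 ≤ m) :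
    grundy {1} {d₁, d₂} m =
      mex ({grundy {1} {d₁, d₂} (m - 1)} ∪ dvals d₁ d₂ m) := by
  rw [grundy]
  congr 1
  ext x
  simp only [Finset.coe_image, Set.mem_image, Finset.mem_coe, Finset.mem_attach, true_and,
    Subtype.exists, Set.mem_union, Set.mem_singleton_iff]
  constructor
  · rintro ⟨t, ht, rfl⟩
    simp only [followers, Finset.mem_union, Finset.mem_image, Finset.mem_filter,
      Finset.mem_singleton] at ht
    rcases ht with ⟨s, ⟨rfl, -, -⟩, rfl⟩ | ⟨d, ⟨hd, h2, h0, hdvd⟩, rfl⟩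
    · exact Or.inl rfl
    · exact Or.inr ⟨d, by simpa using hd, h2, h0, hdvd, rfl⟩
  · rintro (rfl | ⟨d, hd, h2, h0, hdvd, rfl⟩)
    · refine ⟨m - 1, ?_, rfl⟩
      simp only [followers, Finset.mem_union, Finset.mem_image, Finset.mem_filter,
        Finset.mem_singleton]
      exact Or.inl ⟨1, ⟨rfl, by omega⟩, rfl⟩
    · refine ⟨m / d, ?_, rfl⟩
      simp only [followers, Finset.mem_union, Finset.mem_image, Finset.mem_filter]
      exact Or.inr ⟨d, ⟨by simpa using hd, h2, h0, hdvd⟩, rfl⟩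

lemma mex_eq_zero {T : Set ℕ} (h : 0 ∉ T) : mex T = 0 :=
  Nat.sInf_eq_zero.mpr (Or.inl h)

lemma mex_ne_zero {T : Set ℕ} (h0 : 0 ∈ T) (h1 : ∃ k, k ∉ T) : mex T ≠ 0 := by
  intro h
  rcases Nat.sInf_eq_zero.mp h with h' | h'
  · exact h' h0
  · obtain ⟨k, hk⟩ := h1
    exact (Set.eq_empty_iff_forall_notMem.mp h' k) hk

lemma dvals_cases {d₁ d₂ m x : ℕ} (h : x ∈ dvals d₁ d₂ m) :
    x = grundy {1} {d₁, d₂} (m / d₁) ∨ x = grundy {1} {d₁, d₂} (m / d₂) := by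
  obtain ⟨d, hd, -, -, -, rfl⟩ := h
  simp only [Finset.mem_insert, Finset.mem_singleton] at hd
  rcases hd with rfl | rfl
  · exact Or.inl rfl
  · exact Or.inr rfl

lemma dvals_empty {d₁ d₂ m : ℕ} (h1 : ¬ d₁ ∣ m) (h2 : ¬ d₂ ∣ m) : dvals d₁ d₂ m = ∅ := by
  ext x
  simp only [dvals, Set.mem_setOf_eq, Set.mem_empty_iff_false, iff_false]
  rintro ⟨d, hd, -, -, hdvd, -⟩
  simp only [Finset.mem_insert, Finset.mem_singleton] at hd
  rcases hd with rfl | rfl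
  · exact h1 hdvd
  · exact h2 hdvd

lemma zero_mem_dvals {d₁ d₂ m : ℕ} (h2 : 2 ≤ d₁) (h0 : 0 < m) (hdvd : d₁ ∣ m)
    (hg : grundy {1} {d₁, d₂} (m / d₁) = 0) : (0 : ℕ) ∈ dvals d₁ d₂ m :=
  ⟨d₁, by simp, h2, h0, hdvd, hg.symm⟩

/-- the union set at each step has something outside of it -/
lemma exists_notMem_union {d₁ d₂ m x : ℕ} :
    ∃ k, k ∉ ({x} : Set ℕ) ∪ dvals d₁ d₂ m := by
  refine ⟨x + grundy {1} {d₁, d₂} (m / d₁) + grundy {1} {d₁, d₂} (m / d₂) + 1, ?_⟩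
  rintro (h | h)
  · simp only [Set.mem_singleton_iff] at h; omega
  · rcases dvals_cases h with h | h <;> omega

lemma grundy_step0 {d₁ d₂ m : ℕ} (hm : 1 ≤ m) (h1 : ¬ d₁ ∣ m) (h2 : ¬ d₂ ∣ m)
    (hg : grundy {1} {d₁, d₂} (m - 1) ≠ 0) : grundy {1} {d₁, d₂} m = 0 := by
  rw [grundy_succ hm, dvals_empty h1 h2, Set.union_empty]
  exact mex_eq_zero (fun h => hg (Set.mem_singleton_iff.mp h).symm)

lemma density {d₁ d₂ : ℕ} (h₁ : 2 < d₁) (h₂ : d₁ < d₂) (q : ℕ) :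
    ∃ j, q ≤ j ∧ j ≤ q + 3 ∧ grundy {1} {d₁, d₂} j = 0 := by
  by_cases hq : grundy {1} {d₁, d₂} q = 0
  · exact ⟨q, le_refl q, by omega, hq⟩
  by_cases hA : grundy {1} {d₁, d₂} (q + 1) = 0
  · exact ⟨q + 1, by omega, by omega, hA⟩
  by_cases hB : grundy {1} {d₁, d₂} (q + 2) = 0
  · exact ⟨q + 2, by omega, by omega, hB⟩
  have m1 : d₁ ∣ q + 1 ∨ d₂ ∣ q + 1 := by
    by_contra h
    push_neg at h
    exact hA (grundy_step0 (by omega) h.1 h.2 (by simpa using hq))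
  have m2 : d₁ ∣ q + 2 ∨ d₂ ∣ q + 2 := by
    by_contra h
    push_neg at h
    exact hB (grundy_step0 (by omega) h.1 h.2 (by simpa using hA))
  have n1 : ¬ d₁ ∣ q + 3 := by
    intro h
    rcases m1 with h1 | h1
    · have : d₁ ∣ 2 := by
        have := Nat.dvd_sub h h1
        simpa using this
      exact absurd (Nat.le_of_dvd (by norm_num) this) (by omega)
    · rcases m2 with h2' | h2'
      · have : d₁ ∣ 1 := by
          have := Nat.dvd_sub h h2'
          simpa using this
        exact absurd (Nat.le_of_dvd (by norm_num) this) (by omega)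
      · have : d₂ ∣ 1 := by
          have := Nat.dvd_sub h2' h1
          simpa using this
        exact absurd (Nat.le_of_dvd (by norm_num) this) (by omega)
  have n2 : ¬ d₂ ∣ q + 3 := by
    intro h
    rcases m1 with h1 | h1
    · rcases m2 with h2' | h2'
      · have : d₁ ∣ 1 := by
          have := Nat.dvd_sub h2' h1
          simpa using this
        exact absurd (Nat.le_of_dvd (by norm_num) this) (by omega)
      · have : d₂ ∣ 1 := by
          have := Nat.dvd_sub h h2'
          simpa using this
        exact absurd (Nat.le_of_dvd (by norm_num) this) (by omega)
    · have : d₂ ∣ 2 := by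
        have := Nat.dvd_sub h h1
        simpa using this
      exact absurd (Nat.le_of_dvd (by norm_num) this) (by omega)
  exact ⟨q + 3, by omega, by omega, grundy_step0 (by omega) n1 n2 (by simpa using hB)⟩


/-- In i-MARK({1},{d₁,d₂}) with `2 < d₁ < d₂`, convergence occurs in at most
`d₁²·d₂² + d₂ + 1` steps at every starting position. -/
theorem imark_one_d1_d2_convergence_bound (d₁ d₂ : ℕ) (h₁ : 2 < d₁) (h₂ : d₁ < d₂) (n : ℕ) :
    ∃ c' : ℕ, 1 ≤ c' ∧ c' ≤ d₁ ^ 2 * d₂ ^ 2 + d₂ + 1 ∧ ConvergesIn {1} {d₁, d₂} n c' := by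
  set B := d₁ ^ 2 * d₂ ^ 2 + d₂ + 1 with hB
  have hBbig : 4 * d₁ + 6 ≤ B := by
    have h3 : 3 ≤ d₁ := h₁
    have h4 : 4 ≤ d₂ := by omega
    have k1 : (16 : ℕ) ≤ d₂ ^ 2 := by nlinarith
    have k2 : 3 * d₁ ≤ d₁ ^ 2 := by nlinarith
    have k3 : 3 * d₁ * 16 ≤ d₁ ^ 2 * d₂ ^ 2 := Nat.mul_le_mul k2 k1
    omega
  refine ⟨B, by omega, le_refl B, ?_⟩
  intro σ σ' _ _ m hm1 hm2
  have hsup : ({1} : Finset ℕ).sup id = 1 := by simp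
  rw [hsup] at hm2
  have hmeq : m = n + B := by omega
  set a := guessSeq {1} {d₁, d₂} n σ with ha
  set b := guessSeq {1} {d₁, d₂} n σ' with hb
  -- find a grundy-zero quotient
  obtain ⟨j, hj1, hj2, hj0⟩ := density h₁ h₂ (n / d₁ + 1)
  set m₀ := d₁ * j with hm₀
  have hd₁pos : 0 < d₁ := by omega
  have hX : n = d₁ * (n / d₁) + n % d₁ := (Nat.div_add_mod n d₁).symm
  have hXlt : n % d₁ < d₁ := Nat.mod_lt _ hd₁pos
  have hlow : n < m₀ := by
    have h5 : d₁ * (n / d₁ + 1) ≤ d₁ * j := Nat.mul_le_mul_left _ (by omega)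
    have e1 : d₁ * (n / d₁ + 1) = d₁ * (n / d₁) + d₁ := by ring
    omega
  have hhigh : m₀ + 2 ≤ n + B := by
    have h6 : d₁ * j ≤ d₁ * (n / d₁ + 4) := Nat.mul_le_mul_left _ (by omega)
    have e2 : d₁ * (n / d₁ + 4) = d₁ * (n / d₁) + 4 * d₁ := by ring
    omega
  have hdvd : d₁ ∣ m₀ := Dvd.intro _ rfl
  have hdiv : m₀ / d₁ = j := Nat.mul_div_cancel_left j hd₁pos
  have hz : (0 : ℕ) ∈ dvals d₁ d₂ m₀ :=
    zero_mem_dvals (by omega) (by omega) hdvd (by rw [hdiv]; exact hj0)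
  have ha0 : a m₀ ≠ 0 := by
    rw [ha, guessSeq_ge σ (by omega)]
    exact mex_ne_zero (Set.mem_union_right _ hz) exists_notMem_union
  have hb0 : b m₀ ≠ 0 := by
    rw [hb, guessSeq_ge σ' (by omega)]
    exact mex_ne_zero (Set.mem_union_right _ hz) exists_notMem_union
  -- merge point
  have merge : ∃ p, n + 1 ≤ p ∧ p ≤ n + B ∧ a p = b p := by
    by_cases h0 : (0 : ℕ) ∈ dvals d₁ d₂ (m₀ + 1)
    · -- m₀ + 1 is a multiple of d₂, so m₀ + 2 is a non-multiple
      obtain ⟨d, hd, -, -, hddvd, -⟩ := id h0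
      simp only [Finset.mem_insert, Finset.mem_singleton] at hd
      have hd2 : d₂ ∣ m₀ + 1 := by
        rcases hd with rfl | rfl
        · exfalso
          have : d ∣ 1 := by
            have := Nat.dvd_sub hddvd hdvd
            simpa using this
          exact absurd (Nat.le_of_dvd (by norm_num) this) (by omega)
        · exact hddvd
      have ha1 : a (m₀ + 1) ≠ 0 := by
        rw [ha, guessSeq_ge σ (by omega)]
        exact mex_ne_zero (Set.mem_union_right _ h0) exists_notMem_union
      have hb1 : b (m₀ + 1) ≠ 0 := by
        rw [hb, guessSeq_ge σ' (by omega)]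
        exact mex_ne_zero (Set.mem_union_right _ h0) exists_notMem_union
      have n1 : ¬ d₁ ∣ m₀ + 2 := by
        intro h
        have : d₁ ∣ 2 := by
          have := Nat.dvd_sub h hdvd
          simpa using this
        exact absurd (Nat.le_of_dvd (by norm_num) this) (by omega)
      have n2 : ¬ d₂ ∣ m₀ + 2 := by
        intro h
        have : d₂ ∣ 1 := by
          have := Nat.dvd_sub h hd2
          simpa using this
        exact absurd (Nat.le_of_dvd (by norm_num) this) (by omega)
      refine ⟨m₀ + 2, by omega, by omega, ?_⟩
      rw [ha, hb, guessSeq_ge σ (by omega), guessSeq_ge σ' (by omega),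
        dvals_empty n1 n2, Set.union_empty, Set.union_empty,
        show m₀ + 2 - 1 = m₀ + 1 by omega]
      rw [mex_eq_zero (fun h => ha1 (Set.mem_singleton_iff.mp h).symm),
        mex_eq_zero (fun h => hb1 (Set.mem_singleton_iff.mp h).symm)]
    · refine ⟨m₀ + 1, by omega, by omega, ?_⟩
      rw [ha, hb, guessSeq_ge σ (by omega), guessSeq_ge σ' (by omega)]
      simp only [Nat.add_sub_cancel]
      rw [mex_eq_zero ?_, mex_eq_zero ?_]
      · rintro (h | h)
        · exact hb0 (Set.mem_singleton_iff.mp h).symm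
        · exact h0 h
      · rintro (h | h)
        · exact ha0 (Set.mem_singleton_iff.mp h).symm
        · exact h0 h
  obtain ⟨p, hp1, hp2, hp⟩ := merge
  have prop : ∀ k, a (p + k) = b (p + k) := by
    intro k
    induction k with
    | zero => simpa using hp
    | succ k ih =>
      rw [show p + (k + 1) = (p + k) + 1 by ring, ha, hb,
        guessSeq_ge σ (by omega), guessSeq_ge σ' (by omega)]
      simp only [Nat.add_sub_cancel]
      rw [← ha, ← hb, ih]
  have := prop (m - p)
  rwa [show p + (m - p) = m by omega] at this
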